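/- arXiv:1907.04720 — 2 statements merged into one kernel-verified Lean document; each statement's English description precedes it below -/
import Mathlib

section
/- The map Z : ℝ³ → ℝ³ is continuous. -/
/-- Explicit vector in ℝ³ (with the Euclidean norm). -/
def vec3 (a b c : ℝ) : EuclideanSpace ℝ (Fin 3) := WithLp.toLp 2 ![a, b, c]

/-- The 4-periodic sawtooth: h(t) = t on [-1,1], h(t) = 2 - t on [1,3]. -/
noncomputable def h (t : ℝ) : ℝ := 1 - |4 * Int.fract ((t + 1) / 4) - 2|

/-- The sign function ε(t) = (-1)^⌊(t+1)/2⌋. -/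
noncomputable def eps (t : ℝ) : ℝ := (-1 : ℝ) ^ ⌊(t + 1) / 2⌋

/-- The Zorich-type map Z : ℝ³ → ℝ³. -/
noncomputable def Z (x : EuclideanSpace ℝ (Fin 3)) : EuclideanSpace ℝ (Fin 3) :=
  Real.exp (x 2) •
    vec3 (h (x 0)) (h (x 1)) (eps (x 0) * eps (x 1) * (1 - max |h (x 0)| |h (x 1)|))

/-- Rotation by π about the vertical line {(u,v,t) : t ∈ ℝ}. -/
noncomputable def Rot (u v : ℝ) (x : EuclideanSpace ℝ (Fin 3)) : EuclideanSpace ℝ (Fin 3) :=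
  vec3 (2 * u - x 0) (2 * v - x 1) (x 2)

lemma hcont : Continuous h := by
  have f_cont : ContinuousOn (fun s : ℝ => 1 - |4 * s - 2|) (Set.Icc 0 1) := by fun_prop
  have h1 : Continuous ((fun s : ℝ => 1 - |4 * s - 2|) ∘ Int.fract) :=
    ContinuousOn.comp_fract'' f_cont (by norm_num)
  have h2 : Continuous (fun t : ℝ => (t + 1) / 4) := by fun_prop
  exact h1.comp h2

lemma eps_cases (t : ℝ) : eps t = 1 ∨ eps t = -1 := by
  rcases Int.even_or_odd ⌊(t+1)/2⌋ with he | ho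
  · exact Or.inl (he.neg_one_zpow)
  · exact Or.inr (ho.neg_one_zpow)

lemma abs_h_le_one (t : ℝ) : |h t| ≤ 1 := by
  have h0 : 0 ≤ Int.fract ((t+1)/4) := Int.fract_nonneg _
  have h1 : Int.fract ((t+1)/4) < 1 := Int.fract_lt_one _
  rw [abs_le, h]
  constructor
  · rcases abs_cases (4 * Int.fract ((t + 1) / 4) - 2) with ⟨e,_⟩|⟨e,_⟩ <;> rw [e] <;> linarith
  · rcases abs_cases (4 * Int.fract ((t + 1) / 4) - 2) with ⟨e,_⟩|⟨e,_⟩ <;> rw [e] <;> linarith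

lemma h_shift (t : ℝ) : h (t + 1) = eps t * (1 - |h t|) := by
  set u := Int.fract ((t+1)/4) with hu
  have hu0 : 0 ≤ u := Int.fract_nonneg _
  have hu1 : u < 1 := Int.fract_lt_one _
  have hdef : u = (t+1)/4 - ⌊(t+1)/4⌋ := rfl
  have hfr : Int.fract ((t + 1 + 1) / 4) = Int.fract (u + 1/4) := by
    have : (t + 1 + 1) / 4 = (u + 1/4) + (⌊(t+1)/4⌋ : ℝ) := by rw [hdef]; ring
    rw [this, Int.fract_add_intCast]
  have hfl : ⌊(t + 1) / 2⌋ = 2 * ⌊(t+1)/4⌋ + ⌊2 * u⌋ := by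
    have : (t + 1) / 2 = ((2 * ⌊(t+1)/4⌋ : ℤ) : ℝ) + 2 * u := by push_cast; rw [hdef]; ring
    rw [this, Int.floor_intCast_add]
  have heps : eps t = (-1 : ℝ) ^ ⌊2 * u⌋ := by
    rw [eps, hfl, zpow_add₀ (by norm_num : (-1:ℝ) ≠ 0), zpow_mul]
    norm_num
  rw [h, hfr, heps]
  rw [show h t = 1 - |4 * u - 2| from rfl]
  rcases lt_or_ge u (1/2) with hhalf | hhalf
  · have hfl2 : ⌊2 * u⌋ = 0 := Int.floor_eq_zero_iff.mpr ⟨by linarith, by linarith⟩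
    rw [hfl2, zpow_zero, one_mul]
    rw [abs_of_nonpos (by linarith : 4 * u - 2 ≤ 0)]
    have hfr2 : Int.fract (u + 1/4) = u + 1/4 := Int.fract_eq_self.mpr ⟨by linarith, by linarith⟩
    rw [hfr2]
    rcases lt_or_ge u (1/4) with hq | hq
    · rw [abs_of_nonpos (by linarith), abs_of_nonpos (by linarith)]; ring
    · rw [abs_of_nonneg (by linarith), abs_of_nonneg (by linarith)]; ring
  · have hfl2 : ⌊2 * u⌋ = 1 := by
      rw [Int.floor_eq_iff]; push_cast; constructor <;> linarith
    rw [hfl2, zpow_one]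
    rw [abs_of_nonneg (by linarith : 0 ≤ 4 * u - 2)]
    rcases lt_or_ge u (3/4) with hq | hq
    · have hfr2 : Int.fract (u + 1/4) = u + 1/4 := Int.fract_eq_self.mpr ⟨by linarith, by linarith⟩
      rw [hfr2, abs_of_nonneg (by linarith), abs_of_nonneg (by linarith)]; ring
    · have hfr2 : Int.fract (u + 1/4) = u - 3/4 := by
        have : u + 1/4 = (u - 3/4) + ((1:ℤ):ℝ) := by push_cast; ring
        rw [this, Int.fract_add_intCast, Int.fract_eq_self.mpr ⟨by linarith, by linarith⟩]
      rw [hfr2, abs_of_nonpos (by linarith), abs_of_nonpos (by linarith)]; ring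

lemma key_abs (a b : ℝ) (ha : 0 ≤ a) (hb : 0 ≤ b) (e f : ℝ) (he : e = 1 ∨ e = -1)
    (hf : f = 1 ∨ f = -1) :
    e * f * (1 - max (1 - a) (1 - b)) = (|e * a + f * b| - |e * a - f * b|) / 2 := by
  have habs : |e| = 1 := by rcases he with rfl | rfl <;> norm_num
  have h1 : |e * a + f * b| = |a + e * f * b| := by
    have : e * (a + e * f * b) = e * a + f * b := by rcases he with rfl | rfl <;> ring
    rw [← this, abs_mul, habs, one_mul]
  have h2 : |e * a - f * b| = |a - e * f * b| := by
    have : e * (a - e * f * b) = e * a - f * b := by rcases he with rfl | rfl <;> ring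
    rw [← this, abs_mul, habs, one_mul]
  rw [h1, h2]
  have hs : e * f = 1 ∨ e * f = -1 := by
    rcases he with rfl | rfl <;> rcases hf with rfl | rfl <;> norm_num
  rcases hs with hs | hs <;> rw [hs]
  · simp only [one_mul]
    rw [abs_of_nonneg (by linarith : (0:ℝ) ≤ a + b)]
    rcases max_cases (1 - a) (1 - b) with ⟨hm, hm'⟩ | ⟨hm, hm'⟩ <;> rw [hm] <;>
      rcases abs_cases (a - b) with ⟨h3, h4⟩ | ⟨h3, h4⟩ <;> rw [h3] <;> linarith
  · rw [show a + -1 * b = a - b from by ring, show a - -1 * b = a + b from by ring,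
      abs_of_nonneg (by linarith : (0:ℝ) ≤ a + b)]
    rcases max_cases (1 - a) (1 - b) with ⟨hm, hm'⟩ | ⟨hm, hm'⟩ <;> rw [hm] <;>
      rcases abs_cases (a - b) with ⟨h3, h4⟩ | ⟨h3, h4⟩ <;> rw [h3] <;> linarith

lemma third_eq (x y : ℝ) : eps x * eps y * (1 - max |h x| |h y|)
    = (|h (x + 1) + h (y + 1)| - |h (x + 1) - h (y + 1)|) / 2 := by
  rw [h_shift x, h_shift y]
  have hm : max |h x| |h y| = max (1 - (1 - |h x|)) (1 - (1 - |h y|)) := by norm_num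
  rw [hm]
  exact key_abs (1 - |h x|) (1 - |h y|) (by linarith [abs_h_le_one x])
    (by linarith [abs_h_le_one y]) _ _ (eps_cases x) (eps_cases y)

/-- The map Z : ℝ³ → ℝ³ is continuous. -/
theorem zorich_continuous : Continuous Z := by
  have hproj : ∀ i, Continuous (fun x : EuclideanSpace ℝ (Fin 3) => x i) := fun i =>
    (continuous_apply i).comp (EuclideanSpace.equiv (Fin 3) ℝ).continuous
  have hZ : Z = fun x => Real.exp (x 2) • vec3 (h (x 0)) (h (x 1))
      ((|h (x 0 + 1) + h (x 1 + 1)| - |h (x 0 + 1) - h (x 1 + 1)|) / 2) := by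
    funext x
    rw [Z, third_eq]
  rw [hZ]
  have h0 : Continuous fun x : EuclideanSpace ℝ (Fin 3) => h (x 0) := hcont.comp (hproj 0)
  have h1 : Continuous fun x : EuclideanSpace ℝ (Fin 3) => h (x 1) := hcont.comp (hproj 1)
  have h0' : Continuous fun x : EuclideanSpace ℝ (Fin 3) => h (x 0 + 1) :=
    hcont.comp ((hproj 0).add continuous_const)
  have h1' : Continuous fun x : EuclideanSpace ℝ (Fin 3) => h (x 1 + 1) :=
    hcont.comp ((hproj 1).add continuous_const)
  have hthird : Continuous fun x : EuclideanSpace ℝ (Fin 3) =>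
      (|h (x 0 + 1) + h (x 1 + 1)| - |h (x 0 + 1) - h (x 1 + 1)|) / 2 :=
    (((h0'.add h1').abs.sub (h0'.sub h1').abs).div_const 2)
  have hvec : Continuous fun x : EuclideanSpace ℝ (Fin 3) => vec3 (h (x 0)) (h (x 1))
      ((|h (x 0 + 1) + h (x 1 + 1)| - |h (x 0 + 1) - h (x 1 + 1)|) / 2) := by
    have hpi : Continuous (fun x : EuclideanSpace ℝ (Fin 3) => (![h (x 0), h (x 1),
        (|h (x 0 + 1) + h (x 1 + 1)| - |h (x 0 + 1) - h (x 1 + 1)|) / 2] : Fin 3 → ℝ)) := by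
      refine continuous_pi fun i => ?_
      fin_cases i
      · exact h0
      · exact h1
      · exact hthird
    exact (PiLp.continuous_toLp 2 (fun _ : Fin 3 => ℝ)).comp hpi
  exact (Real.continuous_exp.comp (hproj 2)).smul hvec
end

section
/- The restriction of Z to the closed beam [-1,1] × [-1,1] × ℝ is injective. -/
lemma h_id {t : ℝ} (h1 : -1 ≤ t) (h2 : t ≤ 1) : h t = t := by
  unfold h
  have hf : Int.fract ((t + 1) / 4) = (t + 1) / 4 :=
    Int.fract_eq_self.2 ⟨by linarith, by linarith⟩
  rw [hf]
  have : 4 * ((t + 1) / 4) - 2 = t - 1 := by ring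
  rw [this, abs_of_nonpos (by linarith)]
  ring

lemma eps_one {t : ℝ} (h1 : -1 ≤ t) (h2 : t < 1) : eps t = 1 := by
  unfold eps
  have : ⌊(t + 1) / 2⌋ = 0 := by
    rw [Int.floor_eq_zero_iff]
    simp only [Set.mem_Ico]; constructor <;> linarith
  rw [this]; norm_num

lemma third_comp {a b : ℝ} (ha1 : -1 ≤ a) (ha2 : a ≤ 1) (hb1 : -1 ≤ b) (hb2 : b ≤ 1) :
    eps a * eps b * (1 - max |a| |b|) = 1 - max |a| |b| := by
  rcases eq_or_lt_of_le ha2 with rfl | ha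
  · have : max |(1:ℝ)| |b| = 1 := by
      rw [abs_one]; exact max_eq_left (abs_le.2 ⟨hb1, hb2⟩)
    rw [this]; ring
  rcases eq_or_lt_of_le hb2 with rfl | hb
  · have : max |a| |(1:ℝ)| = 1 := by
      rw [abs_one]; exact max_eq_right (abs_le.2 ⟨ha1, ha2⟩)
    rw [this]; ring
  rw [eps_one ha1 ha, eps_one hb1 hb]; ring

/-- Z is injective on the closed beam [-1,1] × [-1,1] × ℝ. -/
theorem zorich_injOn_beam :
    Set.InjOn Z {x : EuclideanSpace ℝ (Fin 3) |
      x 0 ∈ Set.Icc (-1 : ℝ) 1 ∧ x 1 ∈ Set.Icc (-1 : ℝ) 1} := by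
  rintro x ⟨⟨hx0l, hx0r⟩, ⟨hx1l, hx1r⟩⟩ y ⟨⟨hy0l, hy0r⟩, ⟨hy1l, hy1r⟩⟩ hZ
  set s := Real.exp (x 2) with hs
  set t := Real.exp (y 2) with ht
  have hsp : 0 < s := Real.exp_pos _
  have htp : 0 < t := Real.exp_pos _
  have e0 : s * x 0 = t * y 0 := by
    have := congrArg (fun v => v 0) hZ
    simpa [Z, vec3, h_id hx0l hx0r, h_id hy0l hy0r] using this
  have e1 : s * x 1 = t * y 1 := by
    have := congrArg (fun v => v 1) hZ
    simpa [Z, vec3, h_id hx0l hx0r, h_id hy0l hy0r, h_id hx1l hx1r, h_id hy1l hy1r] using this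
  have e2 : s * (1 - max |x 0| |x 1|) = t * (1 - max |y 0| |y 1|) := by
    have := congrArg (fun v => v 2) hZ
    simp only [Z, vec3, h_id hx0l hx0r, h_id hy0l hy0r, h_id hx1l hx1r, h_id hy1l hy1r,
      third_comp hx0l hx0r hx1l hx1r, third_comp hy0l hy0r hy1l hy1r] at this
    simpa using this
  have em : s * max |x 0| |x 1| = t * max |y 0| |y 1| := by
    rw [mul_max_of_nonneg _ _ hsp.le, mul_max_of_nonneg _ _ htp.le,
      ← abs_of_pos hsp, ← abs_mul, ← abs_mul, ← abs_of_pos htp (a := t), ← abs_mul, ← abs_mul,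
      e0, e1]
  have hst : s = t := by linarith
  have h2 : x 2 = y 2 := Real.exp_injective (by rw [← hs, ← ht, hst])
  have h0 : x 0 = y 0 := by
    rw [hst] at e0; exact mul_left_cancel₀ htp.ne' e0
  have h1 : x 1 = y 1 := by
    rw [hst] at e1; exact mul_left_cancel₀ htp.ne' e1
  ext i
  fin_cases i <;> assumption
end
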